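/- Let $F_n$ be the $n \times n$ tridiagonal matrix with $1$ on the main diagonal and superdiagonal and $-1$ on the subdiagonal. The characteristic polynomial of $F_n$ (i.e., $\det(xI - F_n)$) equals $f_{n+1}(x-1)$, where $f_m(x)$ are the Fibonacci polynomials defined by $f_1(x)=1$, $f_2(x)=x$, $f_{m+1}(x) = x f_m(x) + f_{m-1}(x)$. -/

import Mathlib

open Polynomial Matrix

noncomputable def dEnt (i j : ℕ) : Polynomial ℤ :=
  if i = j then X - 1 else if j = i + 1 then -1 else if i = j + 1 then 1 else 0

noncomputable def Mmat (n : ℕ) : Matrix (Fin n) (Fin n) (Polynomial ℤ) :=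
  Matrix.of fun i j => dEnt i j

lemma dEnt_shift (i j : ℕ) : dEnt (i+1) (j+1) = dEnt i j := by
  simp [dEnt]

lemma sub1 (n : ℕ) : (Mmat (n+2)).submatrix Fin.succ Fin.succ = Mmat (n+1) := by
  ext i j
  simp [Mmat, dEnt_shift]

lemma det_M_zero : (Mmat 0).det = 1 := by
  simp [Matrix.det_fin_zero]

lemma det_M_one : (Mmat 1).det = X - 1 := by
  simp [Matrix.det_fin_one, Mmat, dEnt]

lemma det_M_rec (n : ℕ) :
    (Mmat (n+2)).det = (X - 1) * (Mmat (n+1)).det + (Mmat n).det := by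
  rw [Matrix.det_succ_row_zero, Fin.sum_univ_succ, Fin.sum_univ_succ]
  have htail : ∀ j : Fin n,
      ((-1 : Polynomial ℤ) ^ ((j.succ.succ : Fin (n+2)) : ℕ) *
        Mmat (n+2) 0 j.succ.succ *
        ((Mmat (n+2)).submatrix Fin.succ j.succ.succ.succAbove).det) = 0 := by
    intro j
    have : Mmat (n+2) 0 j.succ.succ = 0 := by
      simp [Mmat, dEnt]
    simp [this]
  rw [Finset.sum_eq_zero (fun j _ => htail j), add_zero]
  have h00 : Mmat (n+2) 0 0 = X - 1 := by simp [Mmat, dEnt]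
  have h01 : Mmat (n+2) 0 (Fin.succ 0) = -1 := by simp [Mmat, dEnt]
  rw [h00, h01, Fin.succAbove_zero, sub1]
  -- now handle the second term's determinant
  set B := (Mmat (n+2)).submatrix Fin.succ ((0 : Fin (n+1)).succ).succAbove with hB
  have hBdet : B.det = (Mmat n).det := by
    rw [Matrix.det_succ_column_zero, Fin.sum_univ_succ]
    have htail2 : ∀ i : Fin n,
        ((-1 : Polynomial ℤ) ^ ((i.succ : Fin (n+1)) : ℕ) * B i.succ 0 *
          (B.submatrix i.succ.succAbove Fin.succ).det) = 0 := by
      intro i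
      have : B i.succ 0 = 0 := by
        have : ((Fin.succ 0 : Fin (n+2)).succAbove 0) = 0 := Fin.one_succAbove_zero
        simp [hB, Matrix.submatrix_apply, this, Mmat, dEnt]
      simp [this]
    rw [Finset.sum_eq_zero (fun i _ => htail2 i), add_zero]
    have hB00 : B 0 0 = 1 := by
      have h : ((Fin.succ 0 : Fin (n+2)).succAbove 0) = 0 := Fin.one_succAbove_zero
      simp [hB, Matrix.submatrix_apply, h, Mmat, dEnt]
    have hBsub : B.submatrix Fin.succ Fin.succ = Mmat n := by
      ext i j
      have h : ((Fin.succ 0 : Fin (n+2)).succAbove j.succ) = j.succ.succ := by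
        simp [Fin.one_succAbove_succ (n := n) j]
      simp [hB, Matrix.submatrix_apply, h, Mmat, dEnt_shift]
    rw [hB00, Fin.succAbove_zero, hBsub]
    simp
  rw [hBdet]
  simp [Fin.val_succ]

lemma det_M_eq (F : ℕ → Polynomial ℤ) (h1 : F 1 = 1) (h2 : F 2 = Polynomial.X)
    (hrec : ∀ m : ℕ, F (m + 3) = Polynomial.X * F (m + 2) + F (m + 1)) :
    ∀ n : ℕ, (Mmat n).det = (F (n + 1)).comp (Polynomial.X - 1) := by
  intro n
  induction n using Nat.strong_induction_on with
  | _ n ih =>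
    match n with
    | 0 => rw [det_M_zero, h1]; simp
    | 1 => rw [det_M_one, h2]; simp
    | (k + 2) =>
      rw [det_M_rec k, ih (k+1) (by omega), ih k (by omega),
        show k + 2 + 1 = k + 3 from rfl, hrec k]
      simp [Polynomial.add_comp, Polynomial.mul_comp]

theorem charpoly_tridiagonal_eq_fibPoly (n : ℕ)
    (Fn : Matrix (Fin n) (Fin n) ℤ)
    (hFn : ∀ i j : Fin n, Fn i j =
      if (i : ℕ) = (j : ℕ) then 1
      else if (j : ℕ) = (i : ℕ) + 1 then 1
      else if (i : ℕ) = (j : ℕ) + 1 then -1 else 0)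
    (F : ℕ → Polynomial ℤ) (h1 : F 1 = 1) (h2 : F 2 = Polynomial.X)
    (hrec : ∀ m : ℕ, F (m + 3) = Polynomial.X * F (m + 2) + F (m + 1)) :
    Fn.charpoly = (F (n + 1)).comp (Polynomial.X - 1) := by
  have hcm : charmatrix Fn = Mmat n := by
    ext i j
    rw [charmatrix_apply, hFn]
    by_cases hij : (i : ℕ) = (j : ℕ)
    · have : i = j := Fin.ext hij
      subst this
      simp [Mmat, dEnt, Matrix.one_apply, sub_eq_add_neg]
    · have hne : i ≠ j := fun h => hij (by rw [h])
      simp only [Matrix.diagonal_apply_ne _ hne, hij, if_false]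
      simp [Mmat, dEnt, hij, hne, Matrix.one_apply]
      split_ifs <;> simp
  rw [Matrix.charpoly, hcm]
  exact det_M_eq F h1 h2 hrec n
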